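/- Let f : ℝⁿ → ℝ be a continuous convex function and g : ℝⁿ → Y a continuous mapping such that G_K(x) := −g(x) + K is graph-convex. Define φ(x,s) = f(x) + δ_K(g(x)+s), where δ_K is the indicator function of K. Then φ(x,s) is level-bounded in x locally uniformly in s (in the sense of Rockafellar–Wets, Definition 1.16: for every s̄ ∈ Y and every α ∈ ℝ there is a neighborhood V of s̄ together with a bounded set B ⊆ ℝⁿ such that {x : φ(x,s) ≤ α} ⊆ B for all s ∈ V) if and only if the implication (f^∞(h_x) ≤ 0 and 0 ∈ G_K^∞(h_x) ⟹ h_x = 0) holds. -/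

import Mathlib

open Set Filter Topology Bornology Metric
open scoped RealInnerProductSpace

noncomputable section

variable {E : Type*} [NormedAddCommGroup E] [InnerProductSpace ℝ E]
variable {Y : Type*} [NormedAddCommGroup Y] [InnerProductSpace ℝ Y]

/-- The set of feasible shifts `S = {s | ∃ x, g x + s ∈ K}`. -/
def feasShifts (g : E → Y) (K : Set Y) : Set Y := {s | ∃ x, g x + s ∈ K}

/-- The graph of the set-valued mapping `G_K(x) = -g(x) + K`,
i.e. `{(x, y) | g x + y ∈ K}`. -/
def gphGK (g : E → Y) (K : Set Y) : Set (E × Y) := {p | g p.1 + p.2 ∈ K}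

/-- Recession cone of a convex set. -/
def recCone {Z : Type*} [AddCommGroup Z] [Module ℝ Z] (C : Set Z) : Set Z :=
  {d | ∀ z ∈ C, ∀ t : ℝ, 0 ≤ t → z + t • d ∈ C}

/-- Horizon (recession) function of a finite-valued function `f`. -/
def horizonFn (f : E → ℝ) (h : E) : EReal :=
  ⨆ t : {t : ℝ // 0 < t}, (((f ((t : ℝ) • h) - f 0) / (t : ℝ) : ℝ) : EReal)

/-- The optimal value function `ν(s) = inf {f x : g x + s ∈ K}` of the shifted problem. -/
def valFn (f : E → ℝ) (g : E → Y) (K : Set Y) (s : Y) : EReal :=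
  sInf ((fun x => (f x : EReal)) '' {x | g x + s ∈ K})

/-- The solution set `X(s)` of the shifted problem. -/
def solSet (f : E → ℝ) (g : E → Y) (K : Set Y) (s : Y) : Set E :=
  {x | g x + s ∈ K ∧ ∀ x', g x' + s ∈ K → f x ≤ f x'}

/-- The Lagrangian `l(x,y,λ) = f x + ⟨λ, g x - y⟩`. -/
def lagr (f : E → ℝ) (g : E → Y) (x : E) (y : Y) (l : Y) : ℝ :=
  f x + ⟪l, g x - y⟫

/-- The augmented Lagrangian `l_r(x,y,λ) = f x + ⟨λ, g x - y⟩ + (r/2)‖g x - y‖²`. -/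
def auglagr (f : E → ℝ) (g : E → Y) (r : ℝ) (x : E) (y : Y) (l : Y) : ℝ :=
  f x + ⟪l, g x - y⟫ + r / 2 * ‖g x - y‖ ^ 2

/-- The dual function `θ(λ) = - inf {l(x,y,λ) : x ∈ ℝⁿ, y ∈ K}`. -/
def dualFn (f : E → ℝ) (g : E → Y) (K : Set Y) (l : Y) : EReal :=
  - sInf ((fun p : E × Y => ((lagr f g p.1 p.2 l : ℝ) : EReal)) '' {p | p.2 ∈ K})

/-- Fenchel conjugate of an extended-real-valued function. -/
def econj (h : Y → EReal) (l : Y) : EReal := ⨆ s : Y, (⟪l, s⟫ : EReal) - h s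

/-- Convex subdifferential of an extended-real-valued function. -/
def esubdiff (h : Y → EReal) (s : Y) : Set Y :=
  {l | ∀ s', h s + (⟪l, s' - s⟫ : EReal) ≤ h s'}

/-- Convexity of an extended-real-valued function, via its epigraph. -/
def ERealConvexOn (h : Y → EReal) : Prop :=
  Convex ℝ {p : Y × ℝ | h p.1 ≤ (p.2 : EReal)}

/-- Properness of an extended-real-valued function. -/
def ERealProper (h : Y → EReal) : Prop := (∀ s, h s ≠ ⊥) ∧ ∃ s, h s ≠ ⊤

/-- The optimal value `val(D(s)) = sup_λ [⟨s,λ⟩ - θ(λ)]` of the dual problem `D(s)`. -/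
def dualVal (f : E → ℝ) (g : E → Y) (K : Set Y) (s : Y) : EReal :=
  ⨆ l : Y, (⟪s, l⟫ : EReal) - dualFn f g K l

/-- The solution set `Sol(D(s))` of the dual problem `D(s)`. -/
def dualSol (f : E → ℝ) (g : E → Y) (K : Set Y) (s : Y) : Set Y :=
  {l | ∀ l', (⟪s, l'⟫ : EReal) - dualFn f g K l' ≤ (⟪s, l⟫ : EReal) - dualFn f g K l}

/-- The set of proximal points `argmin_{λ'} [h(λ') + ‖λ' - λ‖²/(2r)]`. -/
def proxSet (h : Y → EReal) (r : ℝ) (l : Y) : Set Y :=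
  {m | ∀ m', h m + ((‖m - l‖ ^ 2 / (2 * r) : ℝ) : EReal) ≤
      h m' + ((‖m' - l‖ ^ 2 / (2 * r) : ℝ) : EReal)}

/-- The Moreau–Yosida regularization `h_r(λ) = inf_{λ'} [h(λ') + ‖λ' - λ‖²/(2r)]`. -/
def moreau (h : Y → EReal) (r : ℝ) (l : Y) : EReal :=
  ⨅ m : Y, (h m + ((‖m - l‖ ^ 2 / (2 * r) : ℝ) : EReal))

open Classical in
/-- The extended-real-valued indicator function of a set. -/
def eindicator {Z : Type*} (K : Set Z) (y : Z) : EReal := if y ∈ K then 0 else ⊤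

/-- `φ(x,s) = f(x) + δ_K(g(x)+s)`. -/
def phiFn (f : E → ℝ) (g : E → Y) (K : Set Y) (x : E) (s : Y) : EReal :=
  (f x : EReal) + eindicator K (g x + s)

/-- Proposition 2.2: `φ` is level-bounded in `x` locally uniformly
in `s` iff `(f^∞(h) ≤ 0 and 0 ∈ G_K^∞(h)) ⟹ h = 0`. -/
lemma phiFn_le_iff {f : E → ℝ} {g : E → Y} {K : Set Y} {x : E} {s : Y} {α : ℝ} :
    phiFn f g K x s ≤ (α : EReal) ↔ g x + s ∈ K ∧ f x ≤ α := by
  unfold phiFn eindicator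
  by_cases h : g x + s ∈ K
  · simp [h, EReal.coe_le_coe_iff]
  · simp only [h, if_false, iff_false, not_and]
    have : (f x : EReal) + ⊤ = ⊤ := EReal.add_top_iff_ne_bot.2 (EReal.coe_ne_bot _)
    rw [this]
    simp [top_le_iff, EReal.coe_ne_top]

lemma horizonFn_le_zero_iff {f : E → ℝ} {h : E} :
    horizonFn f h ≤ 0 ↔ ∀ t : ℝ, 0 < t → f (t • h) ≤ f 0 := by
  unfold horizonFn
  rw [iSup_le_iff]
  constructor
  · intro H t ht
    have h1 := H ⟨t, ht⟩
    rw [EReal.coe_nonpos] at h1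
    have h2 : f (t • h) - f 0 ≤ 0 := by
      by_contra hc
      push_neg at hc
      exact absurd h1 (not_le.2 (div_pos hc ht))
    linarith
  · intro H t
    rw [EReal.coe_nonpos]
    exact div_nonpos_of_nonpos_of_nonneg (sub_nonpos.2 (H t t.2)) t.2.le
theorem phi_level_bounded_iff {n : ℕ} {Y : Type*} [NormedAddCommGroup Y]
    [InnerProductSpace ℝ Y] [FiniteDimensional ℝ Y]
    (f : EuclideanSpace ℝ (Fin n) → ℝ) (g : EuclideanSpace ℝ (Fin n) → Y) (K : Set Y)
    (hfconv : ConvexOn ℝ Set.univ f) (hfcont : Continuous f) (hgcont : Continuous g)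
    (hKne : K.Nonempty) (hKclosed : IsClosed K) (hKconv : Convex ℝ K)
    (hgraph : Convex ℝ (gphGK g K)) :
    (∀ (sbar : Y) (α : ℝ), ∃ V ∈ 𝓝 sbar, ∃ B : Set (EuclideanSpace ℝ (Fin n)),
        Bornology.IsBounded B ∧ ∀ s ∈ V, {x | phiFn f g K x s ≤ (α : EReal)} ⊆ B)
    ↔ (∀ h : EuclideanSpace ℝ (Fin n),
        horizonFn f h ≤ (0 : EReal) → (h, (0 : Y)) ∈ recCone (gphGK g K) → h = 0) := by
  constructor
  · intro hlb h hhor hrec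
    by_contra hne
    obtain ⟨y0, hy0⟩ := hKne
    set s0 : Y := y0 - g 0 with hs0
    have hfeas0 : ((0 : EuclideanSpace ℝ (Fin n)), s0) ∈ gphGK g K := by
      simp [gphGK, hs0, hy0]
    obtain ⟨V, hV, B, hB, hsub⟩ := hlb s0 (f 0)
    obtain ⟨R, hR⟩ := hB.subset_closedBall 0
    have hhn : (0 : ℝ) < ‖h‖ := norm_pos_iff.2 hne
    set t : ℝ := (max R 0 + 1) / ‖h‖ with ht_def
    have ht : 0 < t := by positivity
    have hmem : t • h ∈ {x | phiFn f g K x s0 ≤ ((f 0 : ℝ) : EReal)} := by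
      rw [Set.mem_setOf_eq, phiFn_le_iff]
      constructor
      · have := hrec _ hfeas0 t ht.le
        simpa [gphGK] using this
      · exact horizonFn_le_zero_iff.1 hhor t ht
    have hin : t • h ∈ B := hsub s0 (mem_of_mem_nhds hV) hmem
    have hnorm : ‖t • h‖ ≤ R := by simpa [dist_zero_right] using hR hin
    rw [norm_smul, Real.norm_of_nonneg ht.le, ht_def, div_mul_cancel₀ _ hhn.ne'] at hnorm
    have := le_max_left R 0
    linarith
  · intro himp sbar α
    by_contra hcon
    push_neg at hcon
    simp only [Set.not_subset] at hcon
    have key : ∀ k : ℕ, ∃ s, dist s sbar < 1 / (k + 1) ∧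
        ∃ x : EuclideanSpace ℝ (Fin n),
          (g x + s ∈ K ∧ f x ≤ α) ∧ (k : ℝ) < ‖x‖ := by
      intro k
      obtain ⟨s, hs, x, hx, hxB⟩ := hcon (Metric.ball sbar (1 / (k + 1)))
        (Metric.ball_mem_nhds _ (by positivity)) (Metric.closedBall 0 k)
        Metric.isBounded_closedBall
      refine ⟨s, Metric.mem_ball.1 hs, x, phiFn_le_iff.1 hx, ?_⟩
      simpa [Metric.mem_closedBall, dist_zero_right, not_le] using hxB
    choose s hsd x hx hxn using key
    have hstend : Tendsto s atTop (𝓝 sbar) := by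
      rw [tendsto_iff_dist_tendsto_zero]
      refine squeeze_zero (fun k => dist_nonneg) (fun k => (hsd k).le) ?_
      exact tendsto_one_div_add_atTop_nhds_zero_nat
    have hxpos : ∀ k, (0 : ℝ) < ‖x k‖ := fun k => (Nat.cast_nonneg k).trans_lt (hxn k)
    set u : ℕ → EuclideanSpace ℝ (Fin n) := fun k => ‖x k‖⁻¹ • x k with hu_def
    have hu : ∀ k, u k ∈ Metric.sphere (0 : EuclideanSpace ℝ (Fin n)) 1 := by
      intro k
      simp [hu_def, norm_smul, abs_of_pos (inv_pos.2 (hxpos k)),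
        inv_mul_cancel₀ (hxpos k).ne']
    obtain ⟨h, hhs, φ, hφ, hlim⟩ :=
      (isCompact_sphere (0 : EuclideanSpace ℝ (Fin n)) 1).tendsto_subseq hu
    set N : ℕ → ℝ := fun k => ‖x (φ k)‖ with hN_def
    have hN : Tendsto N atTop atTop := by
      refine tendsto_atTop_mono (fun k => ?_) tendsto_natCast_atTop_atTop
      exact ((Nat.cast_le.2 (hφ.le_apply)).trans (hxn (φ k)).le)
    have hNinv : Tendsto (fun k => (N k)⁻¹) atTop (𝓝 0) := hN.inv_tendsto_atTop
    have hNpos : ∀ k, 0 < N k := fun k => hxpos (φ k)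
    -- Claim A : horizon function nonpositive
    have claimA : horizonFn f h ≤ (0 : EReal) := by
      rw [horizonFn_le_zero_iff]
      intro t ht
      set lam : ℕ → ℝ := fun k => t * (N k)⁻¹ with hlam_def
      have hlamt : Tendsto lam atTop (𝓝 0) := by
        simpa using hNinv.const_mul t
      have hLHS : Tendsto (fun k => f (t • u (φ k))) atTop (𝓝 (f (t • h))) :=
        (hfcont.tendsto _).comp (hlim.const_smul t)
      have hRHS : Tendsto (fun k => lam k * α + (1 - lam k) * f 0) atTop (𝓝 (f 0)) := by
        have h1 : Tendsto (fun k => (1 : ℝ) - lam k) atTop (𝓝 (1 - 0)) :=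
          (tendsto_const_nhds : Tendsto (fun _ : ℕ => (1 : ℝ)) atTop (𝓝 1)).sub hlamt
        have := (hlamt.mul_const α).add (h1.mul_const (f 0))
        simpa using this
      refine le_of_tendsto_of_tendsto hLHS hRHS ?_
      filter_upwards [hN.eventually_ge_atTop t] with k hk
      have hl0 : 0 ≤ lam k := mul_nonneg ht.le (inv_nonneg.2 (hNpos k).le)
      have hl1 : lam k ≤ 1 := by
        show t * (N k)⁻¹ ≤ 1
        rw [← div_eq_mul_inv]
        exact (div_le_one (hNpos k)).2 hk
      have hcv := hfconv.2 (Set.mem_univ (x (φ k))) (Set.mem_univ 0) hl0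
        (sub_nonneg.2 hl1) (by ring)
      simp only [smul_zero, add_zero, smul_eq_mul] at hcv
      have harg : lam k • x (φ k) = t • u (φ k) := by
        rw [hlam_def, hu_def]
        simp [smul_smul, hN_def]
      rw [harg] at hcv
      calc f (t • u (φ k)) ≤ lam k * f (x (φ k)) + (1 - lam k) * f 0 := hcv
        _ ≤ lam k * α + (1 - lam k) * f 0 := by
            have := mul_le_mul_of_nonneg_left (hx (φ k)).2 hl0
            linarith
    -- Claim B : recession direction
    have hclosed : IsClosed (gphGK g K) := by
      have : gphGK g K = (fun p : (EuclideanSpace ℝ (Fin n)) × Y => g p.1 + p.2) ⁻¹' K := rfl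
      rw [this]
      exact hKclosed.preimage ((hgcont.comp continuous_fst).add continuous_snd)
    have claimB : (h, (0 : Y)) ∈ recCone (gphGK g K) := by
      intro z hz t ht
      rcases ht.eq_or_lt with rfl | ht
      · simpa using hz
      set lam : ℕ → ℝ := fun k => t * (N k)⁻¹ with hlam_def
      have hlamt : Tendsto lam atTop (𝓝 0) := by
        simpa using hNinv.const_mul t
      set c : ℕ → (EuclideanSpace ℝ (Fin n)) × Y :=
        fun k => (1 - lam k) • z + lam k • (x (φ k), s (φ k)) with hc_def
      have hctend : Tendsto c atTop (𝓝 (z + t • (h, (0 : Y)))) := by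
        have h1 : Tendsto (fun k => (1 - lam k) • z) atTop (𝓝 z) := by
          have hc1 : Tendsto (fun k => (1 : ℝ) - lam k) atTop (𝓝 (1 - 0)) :=
            (tendsto_const_nhds : Tendsto (fun _ : ℕ => (1 : ℝ)) atTop (𝓝 1)).sub hlamt
          have := hc1.smul (tendsto_const_nhds : Tendsto (fun _ : ℕ => z) atTop (𝓝 z))
          simpa using this
        have h2 : Tendsto (fun k => lam k • (x (φ k), s (φ k))) atTop
            (𝓝 (t • (h, (0 : Y)))) := by
          have hfst : Tendsto (fun k => lam k • x (φ k)) atTop (𝓝 (t • h)) := by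
            have heq : ∀ k, lam k • x (φ k) = t • u (φ k) := by
              intro k; rw [hlam_def, hu_def]; simp [smul_smul, hN_def]
            simp only [heq]
            exact hlim.const_smul t
          have hsnd : Tendsto (fun k => lam k • s (φ k)) atTop (𝓝 ((0 : ℝ) • sbar)) :=
            hlamt.smul (hstend.comp hφ.tendsto_atTop)
          rw [zero_smul] at hsnd
          have : Tendsto (fun k => (lam k • x (φ k), lam k • s (φ k))) atTop
              (𝓝 (t • h, (0 : Y))) := hfst.prodMk_nhds hsnd
          simpa [Prod.smul_def] using this
        simpa [hc_def] using h1.add h2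
      have hcmem : ∀ᶠ k in atTop, c k ∈ gphGK g K := by
        filter_upwards [hN.eventually_ge_atTop t] with k hk
        have hl0 : 0 ≤ lam k := mul_nonneg ht.le (inv_nonneg.2 (hNpos k).le)
        have hl1 : lam k ≤ 1 := by
          show t * (N k)⁻¹ ≤ 1
          rw [← div_eq_mul_inv]
          exact (div_le_one (hNpos k)).2 hk
        have hp : (x (φ k), s (φ k)) ∈ gphGK g K := (hx (φ k)).1
        have := hgraph hz hp (sub_nonneg.2 hl1) hl0 (by ring)
        simpa [hc_def] using this
      exact hclosed.mem_of_tendsto hctend hcmem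
    have hz : h = 0 := himp h claimA claimB
    rw [hz] at hhs
    simp at hhs
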